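/- Let f : ℝ^N × ℝ^{d×N} → [0,∞) be continuous with f(y+k,ξ)=f(y,ξ) for all k ∈ ℤ^N, and satisfy (1/β)|ξ|^p − β ≤ f(y;ξ) ≤ β(1+|ξ|^p). Assume also the p-Lipschitz property |f(y;ξ) − f(y;η)| ≤ C(1+|ξ|^{p−1}+|η|^{p−1})|ξ−η| for all y, ξ, η. Let Ω be bounded open, u_n ⇀ u in W^{1,p}(Ω;ℝ^d), r_n → 0 in ℝ^N, and suppose {|∇u_n|^p} is equi-integrable. Then liminf_n ∫_Ω f(x/ε_n − r_n; ∇u_n) dx = liminf_n ∫_Ω f(x/ε_n; ∇u_n) dx for any sequence ε_n → 0⁺. -/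

import Mathlib

open MeasureTheory Filter

private lemma liminf_eq_of_sub_tendsto_zero' {M : ℝ} {a b : ℕ → ℝ}
    (ha0 : ∀ n, 0 ≤ a n) (haM : ∀ n, a n ≤ M) (hb0 : ∀ n, 0 ≤ b n) (hbM : ∀ n, b n ≤ M)
    (h : Tendsto (fun n => a n - b n) atTop (nhds 0)) :
    liminf a atTop = liminf b atTop := by
  have hbdd : ∀ (c : ℕ → ℝ) (m : ℝ), (∀ n, m ≤ c n) → IsBoundedUnder (· ≥ ·) atTop c :=
    fun c m hc => isBoundedUnder_of ⟨m, fun n => hc n⟩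
  have hcob : ∀ (c : ℕ → ℝ) (m : ℝ), (∀ n, c n ≤ m) → IsCoboundedUnder (· ≥ ·) atTop c :=
    fun c m hc =>
      (isBoundedUnder_of (⟨m, fun n => hc n⟩) : IsBoundedUnder (· ≤ ·) atTop c).isCoboundedUnder_ge
  have key : ∀ (a b : ℕ → ℝ), (∀ n, 0 ≤ a n) → (∀ n, 0 ≤ b n) → (∀ n, b n ≤ M) →
      Tendsto (fun n => a n - b n) atTop (nhds 0) → liminf a atTop ≤ liminf b atTop := by
    intro a b ha0 hb0 hbM h
    refine le_of_forall_pos_le_add ?_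
    intro η hη
    have hev : ∀ᶠ n in atTop, a n ≤ b n + η := by
      filter_upwards [h.eventually_lt_const hη] with n hn
      linarith
    calc liminf a atTop ≤ liminf (fun n => b n + η) atTop :=
          liminf_le_liminf hev (hbdd a 0 ha0)
            (hcob _ (M + η) (fun n => add_le_add (hbM n) le_rfl))
      _ = liminf b atTop + η := liminf_add_const atTop b η (hcob b M hbM) (hbdd b 0 hb0)
  refine le_antisymm (key a b ha0 hb0 hbM h) (key b a hb0 ha0 haM ?_)
  have hnegeq : (fun n => b n - a n) = fun n => -(a n - b n) := by funext n; ring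
  rw [hnegeq, ← neg_zero]
  exact h.neg

set_option maxHeartbeats 2000000 in
theorem stmt14 (N d : ℕ) (p β C : ℝ) (hp : 1 < p) (hβ : 0 < β) (hC : 0 < C)
    (f : (Fin N → ℝ) → (Fin d → Fin N → ℝ) → ℝ)
    (hf0 : ∀ y ξ, 0 ≤ f y ξ)
    (hcont : Continuous fun q : (Fin N → ℝ) × (Fin d → Fin N → ℝ) => f q.1 q.2)
    (hper : ∀ (k : Fin N → ℤ) (y : Fin N → ℝ) ξ, f (y + fun j => (k j : ℝ)) ξ = f y ξ)
    (hgrowth : ∀ y ξ, (1 / β) * ‖ξ‖ ^ p - β ≤ f y ξ ∧ f y ξ ≤ β * (1 + ‖ξ‖ ^ p))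
    (hlip : ∀ y ξ η, |f y ξ - f y η| ≤ C * (1 + ‖ξ‖ ^ (p - 1) + ‖η‖ ^ (p - 1)) * ‖ξ - η‖)
    (Ω : Set (Fin N → ℝ)) (hΩo : IsOpen Ω) (hΩb : Bornology.IsBounded Ω)
    (u : ℕ → (Fin N → ℝ) → (Fin d → ℝ)) (hu : ∀ n, Differentiable ℝ (u n))
    (K : ℝ) (hbd : ∀ n,
      (∫ x in Ω, ‖(fun a b => fderiv ℝ (u n) x (Pi.single b 1) a : Fin d → Fin N → ℝ)‖ ^ p) ≤ K)
    (hequi : ∀ ε > (0 : ℝ), ∃ δ > (0 : ℝ), ∀ E ⊆ Ω, MeasurableSet E →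
      volume E < ENNReal.ofReal δ → ∀ n,
      (∫ x in E, ‖(fun a b => fderiv ℝ (u n) x (Pi.single b 1) a : Fin d → Fin N → ℝ)‖ ^ p) < ε)
    (r : ℕ → Fin N → ℝ) (hr : Tendsto r atTop (nhds 0))
    (ε : ℕ → ℝ) (hεpos : ∀ n, 0 < ε n) (hε0 : Tendsto ε atTop (nhds 0)) :
    Filter.liminf (fun n => ∫ x in Ω,
        f (fun j => x j / ε n - r n j) (fun a b => fderiv ℝ (u n) x (Pi.single b 1) a)) atTop
      = Filter.liminf (fun n => ∫ x in Ω,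
        f (fun j => x j / ε n) (fun a b => fderiv ℝ (u n) x (Pi.single b 1) a)) atTop := by
  have hp0 : (0:ℝ) < p := lt_trans one_pos hp
  set g : ℕ → (Fin N → ℝ) → (Fin d → Fin N → ℝ) :=
    fun n x a b => fderiv ℝ (u n) x (Pi.single b 1) a with hgdef
  set F1 : ℕ → (Fin N → ℝ) → ℝ := fun n x => f (fun j => x j / ε n - r n j) (g n x) with hF1
  set F2 : ℕ → (Fin N → ℝ) → ℝ := fun n x => f (fun j => x j / ε n) (g n x) with hF2
  show liminf (fun n => ∫ x in Ω, F1 n x) atTop = liminf (fun n => ∫ x in Ω, F2 n x) atTop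
  have hΩm : MeasurableSet Ω := hΩo.measurableSet
  have hΩfin : volume Ω < ⊤ := hΩb.measure_lt_top
  set V : ℝ := (volume Ω).toReal with hV
  have hV0 : 0 ≤ V := ENNReal.toReal_nonneg
  -- measurability of the gradient matrix
  have hgmeas : ∀ n, Measurable (g n) := by
    intro n
    refine measurable_pi_lambda _ (fun a => measurable_pi_lambda _ (fun b => ?_))
    have h1 : Measurable (fderiv ℝ (u n)) := measurable_fderiv ℝ (u n)
    have h2 : Continuous fun L : (Fin N → ℝ) →L[ℝ] (Fin d → ℝ) => L (Pi.single b 1) a :=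
      (continuous_apply a).comp (ContinuousLinearMap.apply ℝ (Fin d → ℝ) (Pi.single b 1)).continuous
    exact h2.measurable.comp h1
  have hnormmeas : ∀ n, Measurable (fun x => ‖g n x‖ ^ p) := fun n =>
    (Real.continuous_rpow_const hp0.le).measurable.comp (hgmeas n).norm
  -- measurability of the composed integrands
  have hmeasF : ∀ (n : ℕ) (y : (Fin N → ℝ) → (Fin N → ℝ)), Continuous y →
      Measurable (fun x => f (y x) (g n x)) := by
    intro n y hy
    exact hcont.measurable.comp (hy.measurable.prodMk (hgmeas n))
  have hy1 : ∀ n, Continuous (fun x : Fin N → ℝ => (fun j => x j / ε n - r n j)) := fun n =>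
    continuous_pi fun j => ((continuous_apply j).div_const _).sub continuous_const
  have hy2 : ∀ n, Continuous (fun x : Fin N → ℝ => (fun j => x j / ε n)) := fun n =>
    continuous_pi fun j => (continuous_apply j).div_const _
  have hconstInt : ∀ (c : ℝ) (s : Set (Fin N → ℝ)), volume s < ⊤ →
      IntegrableOn (fun _ => c) s volume := fun c s hs => integrableOn_const hs.ne
  have hbd' : ∀ n, (∫ x in Ω, ‖g n x‖ ^ p) ≤ K := hbd
  -- integrability of the composed integrands given integrability of the gradient power
  have hGint : ∀ n, IntegrableOn (fun x => ‖g n x‖ ^ p) Ω volume →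
      ∀ (y : (Fin N → ℝ) → (Fin N → ℝ)), Continuous y →
      IntegrableOn (fun x => f (y x) (g n x)) Ω volume := by
    intro n hPn y hy
    refine Integrable.mono'
      ((hconstInt β Ω hΩfin).add (hPn.const_mul β))
      ((hmeasF n y hy).aestronglyMeasurable.restrict) ?_
    refine Eventually.of_forall (fun x => ?_)
    rw [Real.norm_eq_abs, abs_of_nonneg (hf0 _ _)]
    have h2 := (hgrowth (y x) (g n x)).2
    calc f (y x) (g n x) ≤ β * (1 + ‖g n x‖ ^ p) := h2
      _ = β + β * ‖g n x‖ ^ p := by ring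
  -- if the gradient power is not integrable, both integrals vanish
  have hzero : ∀ n, ¬ IntegrableOn (fun x => ‖g n x‖ ^ p) Ω volume →
      ∀ (y : (Fin N → ℝ) → (Fin N → ℝ)), Continuous y →
      (∫ x in Ω, f (y x) (g n x)) = 0 := by
    intro n hPn y hy
    apply integral_undef
    intro hint
    apply hPn
    refine Integrable.mono'
      ((hint.const_mul β).add (hconstInt (β^2) Ω hΩfin))
      ((hnormmeas n).aestronglyMeasurable.restrict) ?_
    refine Eventually.of_forall (fun x => ?_)
    rw [Real.norm_eq_abs, abs_of_nonneg (Real.rpow_nonneg (norm_nonneg _) p)]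
    have h1 := (hgrowth (y x) (g n x)).1
    have h5 : ‖g n x‖ ^ p / β ≤ f (y x) (g n x) + β := by
      rw [div_eq_inv_mul, ← one_div]; linarith
    have h6 := (div_le_iff₀ hβ).mp h5
    calc ‖g n x‖ ^ p ≤ (f (y x) (g n x) + β) * β := h6
      _ = β * f (y x) (g n x) + β ^ 2 := by ring
  -- upper and lower bounds for the energies
  set M : ℝ := β * (V + max K 0) with hM
  have hlb : ∀ (n : ℕ) (y : (Fin N → ℝ) → (Fin N → ℝ)),
      0 ≤ ∫ x in Ω, f (y x) (g n x) :=
    fun n y => setIntegral_nonneg hΩm (fun x _ => hf0 _ _)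
  have hub : ∀ (n : ℕ) (y : (Fin N → ℝ) → (Fin N → ℝ)), Continuous y →
      (∫ x in Ω, f (y x) (g n x)) ≤ M := by
    intro n y hy
    by_cases hPn : IntegrableOn (fun x => ‖g n x‖ ^ p) Ω volume
    · have hfi := hGint n hPn y hy
      have hdomint : IntegrableOn (fun x => β + β * ‖g n x‖ ^ p) Ω volume :=
        (hconstInt _ Ω hΩfin).add (hPn.const_mul β)
      calc (∫ x in Ω, f (y x) (g n x)) ≤ ∫ x in Ω, (β + β * ‖g n x‖ ^ p) := by
            refine setIntegral_mono_on hfi hdomint hΩm (fun x _ => ?_)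
            have h2 := (hgrowth (y x) (g n x)).2
            linarith [h2]
        _ = β * V + β * ∫ x in Ω, ‖g n x‖ ^ p := by
            rw [integral_add (hconstInt β Ω hΩfin) (hPn.const_mul β),
              setIntegral_const, integral_const_mul, smul_eq_mul, measureReal_def, hV]
            ring
        _ ≤ β * V + β * max K 0 := by
            have := (hbd' n).trans (le_max_left K 0)
            nlinarith [hβ.le]
        _ = M := by rw [hM]; ring
    · rw [hzero n hPn y hy]
      have : 0 ≤ max K 0 := le_max_right _ _
      rw [hM]; nlinarith [hβ.le, hV0]
  -- the core estimate: the difference of energies tends to zero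
  have hdiff : Tendsto (fun n => (∫ x in Ω, F1 n x) - ∫ x in Ω, F2 n x) atTop (nhds 0) := by
    rw [NormedAddCommGroup.tendsto_nhds_zero]
    intro η hη
    obtain ⟨δ₀, hδ₀pos, hδ₀⟩ := hequi (η / (8 * β)) (by positivity)
    have hδ₀' : ∀ E ⊆ Ω, MeasurableSet E → volume E < ENNReal.ofReal δ₀ → ∀ n,
        (∫ x in E, ‖g n x‖ ^ p) < η / (8 * β) := hδ₀
    set T : ℝ := max K 0 with hT
    have hT0 : 0 ≤ T := le_max_right _ _
    set lam : ℝ := (T / δ₀ + 1) ^ (1/p) with hlam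
    have hbase : (1:ℝ) ≤ T / δ₀ + 1 := by
      have : 0 ≤ T / δ₀ := div_nonneg hT0 hδ₀pos.le
      linarith
    have hlam1 : 1 ≤ lam := Real.one_le_rpow hbase (by positivity)
    have hlamp : lam ^ p = T / δ₀ + 1 := by
      rw [hlam, one_div, Real.rpow_inv_rpow (by linarith) hp0.ne']
    set η' : ℝ := η / (2 * (V + 1)) with hη'
    have hη'pos : 0 < η' := by positivity
    set S : Set ((Fin N → ℝ) × (Fin d → Fin N → ℝ)) :=
      (Set.univ.pi fun _ : Fin N => Set.Icc (-1:ℝ) 2) ×ˢ Metric.closedBall 0 lam with hS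
    have hScomp : IsCompact S :=
      (isCompact_univ_pi fun _ => isCompact_Icc).prod (isCompact_closedBall _ _)
    have hUC := hScomp.uniformContinuousOn_of_continuous hcont.continuousOn
    rw [Metric.uniformContinuousOn_iff] at hUC
    obtain ⟨δ₁, hδ₁pos, hδ₁⟩ := hUC η' hη'pos
    filter_upwards [NormedAddCommGroup.tendsto_nhds_zero.mp hr (min δ₁ 1)
      (lt_min hδ₁pos one_pos)] with n hrn
    have hrδ : ‖r n‖ < δ₁ := lt_of_lt_of_le hrn (min_le_left _ _)
    have hr1 : ‖r n‖ ≤ 1 := le_of_lt (lt_of_lt_of_le hrn (min_le_right _ _))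
    by_cases hPn : IntegrableOn (fun x => ‖g n x‖ ^ p) Ω volume
    · -- integrable case: split Ω into small and large gradient parts
      have hfi1 : IntegrableOn (F1 n) Ω volume := hGint n hPn _ (hy1 n)
      have hfi2 : IntegrableOn (F2 n) Ω volume := hGint n hPn _ (hy2 n)
      set A : Set (Fin N → ℝ) := Ω ∩ {x | ‖g n x‖ ≤ lam} with hA
      set B : Set (Fin N → ℝ) := Ω ∩ {x | lam < ‖g n x‖} with hB
      have hAsub : A ⊆ Ω := Set.inter_subset_left
      have hBsub : B ⊆ Ω := Set.inter_subset_left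
      have hAm : MeasurableSet A := hΩm.inter (measurableSet_le (hgmeas n).norm measurable_const)
      have hBm : MeasurableSet B := hΩm.inter (measurableSet_lt measurable_const (hgmeas n).norm)
      have hAB : Ω = A ∪ B := by
        ext x
        simp only [hA, hB, Set.mem_union, Set.mem_inter_iff, Set.mem_setOf_eq]
        constructor
        · intro hx
          rcases le_or_gt (‖g n x‖) lam with h | h
          · exact Or.inl ⟨hx, h⟩
          · exact Or.inr ⟨hx, h⟩
        · rintro (⟨hx, _⟩ | ⟨hx, _⟩) <;> exact hx
      have hdisj : Disjoint A B := by
        rw [Set.disjoint_left]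
        rintro x hxA hxB
        have h1 : ‖g n x‖ ≤ lam := hxA.2
        have h2 : lam < ‖g n x‖ := hxB.2
        exact absurd h2 (not_lt.mpr h1)
      have habs : IntegrableOn (fun x => |F1 n x - F2 n x|) Ω volume := (hfi1.sub hfi2).abs
      -- pointwise estimate on A
      have hptA : ∀ x ∈ A, |F1 n x - F2 n x| ≤ η' := by
        rintro x ⟨hxΩ, hxg⟩
        set y : Fin N → ℝ := fun j => x j / ε n with hy
        set k : Fin N → ℤ := fun j => ⌊y j⌋ with hk
        set z : Fin N → ℝ := fun j => Int.fract (y j) with hz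
        have hzy : (z + fun j => ((k j : ℝ))) = y := funext fun j => Int.fract_add_floor (y j)
        have e2 : F2 n x = f z (g n x) := by
          have : F2 n x = f y (g n x) := rfl
          rw [this, ← hzy, hper]
        have e1 : F1 n x = f (z - r n) (g n x) := by
          have h0 : F1 n x = f (fun j => x j / ε n - r n j) (g n x) := rfl
          have heq : (fun j => x j / ε n - r n j) = (z - r n) + fun j => ((k j : ℝ)) := by
            funext j
            have : z j + (k j : ℝ) = y j := congrFun hzy j
            simp only [Pi.add_apply, Pi.sub_apply]
            have hyj : y j = x j / ε n := rfl
            linarith [this, hyj ▸ this]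
          rw [h0, heq, hper]
        have hmem1 : (z - r n, g n x) ∈ S := by
          constructor
          · rw [Set.mem_univ_pi]
            intro j
            have hf1 : 0 ≤ z j := Int.fract_nonneg _
            have hf2 : z j < 1 := Int.fract_lt_one _
            have hrj : |r n j| ≤ 1 := le_trans (norm_le_pi_norm (r n) j) hr1
            rw [abs_le] at hrj
            constructor
            · simp only [Pi.sub_apply]; linarith
            · simp only [Pi.sub_apply]; linarith
          · rw [Metric.mem_closedBall, dist_zero_right]; exact hxg
        have hmem2 : (z, g n x) ∈ S := by
          constructor
          · rw [Set.mem_univ_pi]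
            intro j
            have hf1 : 0 ≤ z j := Int.fract_nonneg _
            have hf2 : z j < 1 := Int.fract_lt_one _
            exact ⟨by linarith, by linarith⟩
          · rw [Metric.mem_closedBall, dist_zero_right]; exact hxg
        have hdist : dist ((z - r n, g n x) : (Fin N → ℝ) × (Fin d → Fin N → ℝ)) (z, g n x) < δ₁ := by
          rw [Prod.dist_eq]
          have h1 : dist (z - r n) z = ‖r n‖ := by
            rw [dist_eq_norm, sub_sub_cancel_left, norm_neg]
          rw [h1, dist_self]
          rw [max_eq_left (norm_nonneg _)]
          exact hrδ
        have := hδ₁ _ hmem1 _ hmem2 hdist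
        rw [Real.dist_eq] at this
        rw [e1, e2]
        exact le_of_lt this
      -- estimate on A
      have hintA : (∫ x in A, |F1 n x - F2 n x|) ≤ η' * V := by
        have hAfin : volume A < ⊤ := lt_of_le_of_lt (measure_mono hAsub) hΩfin
        calc (∫ x in A, |F1 n x - F2 n x|) ≤ ∫ _x in A, η' :=
              setIntegral_mono_on (habs.mono_set hAsub)
                (hconstInt η' A hAfin) hAm hptA
          _ = (volume A).toReal * η' := by rw [setIntegral_const, smul_eq_mul, measureReal_def]
          _ ≤ V * η' := by
              refine mul_le_mul_of_nonneg_right ?_ hη'pos.le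
              exact ENNReal.toReal_mono (ne_of_lt hΩfin) (measure_mono hAsub)
          _ = η' * V := mul_comm _ _
      -- Chebyshev: B has small measure
      have hBfin : volume B < ⊤ := lt_of_le_of_lt (measure_mono hBsub) hΩfin
      have hc1 : lam ^ p * (volume B).toReal ≤ ∫ x in Ω, ‖g n x‖ ^ p := by
        calc lam ^ p * (volume B).toReal = ∫ _x in B, lam ^ p := by
              rw [setIntegral_const, smul_eq_mul, measureReal_def]; ring
          _ ≤ ∫ x in B, ‖g n x‖ ^ p := by
              refine setIntegral_mono_on (hconstInt (lam ^ p) B hBfin)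
                (hPn.mono_set hBsub) hBm (fun x hx => ?_)
              exact Real.rpow_le_rpow (by linarith) (le_of_lt hx.2) hp0.le
          _ ≤ ∫ x in Ω, ‖g n x‖ ^ p := by
              refine setIntegral_mono_set hPn ?_ hBsub.eventuallyLE
              exact Eventually.of_forall (fun x => Real.rpow_nonneg (norm_nonneg _) p)
      have hc2 : (volume B).toReal < δ₀ := by
        by_contra hcon
        push_neg at hcon
        have h1 : (T / δ₀ + 1) * δ₀ ≤ (T / δ₀ + 1) * (volume B).toReal :=
          mul_le_mul_of_nonneg_left hcon (by linarith)
        have h2 : (T / δ₀ + 1) * δ₀ = T + δ₀ := by field_simp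
        have h3 : lam ^ p * (volume B).toReal ≤ T := (hc1.trans (hbd' n)).trans (le_max_left _ _)
        rw [hlamp] at h3
        linarith
      have hBvol : volume B < ENNReal.ofReal δ₀ :=
        (ENNReal.lt_ofReal_iff_toReal_lt (ne_of_lt hBfin)).mpr hc2
      have hE : (∫ x in B, ‖g n x‖ ^ p) < η / (8 * β) := hδ₀' B hBsub hBm hBvol n
      -- pointwise estimate on B
      have hptB : ∀ x ∈ B, |F1 n x - F2 n x| ≤ 4 * β * ‖g n x‖ ^ p := by
        rintro x ⟨hxΩ, hxg⟩
        have h1 : 1 ≤ ‖g n x‖ ^ p :=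
          Real.one_le_rpow (le_trans hlam1 (le_of_lt hxg)) hp0.le
        have b1 := (hgrowth (fun j => x j / ε n - r n j) (g n x)).2
        have b2 := (hgrowth (fun j => x j / ε n) (g n x)).2
        have n1 : 0 ≤ F1 n x := hf0 _ _
        have n2 : 0 ≤ F2 n x := hf0 _ _
        have hb1 : F1 n x ≤ β * (1 + ‖g n x‖ ^ p) := b1
        have hb2 : F2 n x ≤ β * (1 + ‖g n x‖ ^ p) := b2
        have hββ : β * 1 ≤ β * ‖g n x‖ ^ p := mul_le_mul_of_nonneg_left h1 hβ.le
        rw [abs_le]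
        constructor <;> nlinarith
      -- estimate on B
      have hintB : (∫ x in B, |F1 n x - F2 n x|) < η / 2 := by
        calc (∫ x in B, |F1 n x - F2 n x|) ≤ ∫ x in B, 4 * β * ‖g n x‖ ^ p :=
              setIntegral_mono_on (habs.mono_set hBsub)
                ((hPn.mono_set hBsub).const_mul (4 * β)) hBm hptB
          _ = 4 * β * ∫ x in B, ‖g n x‖ ^ p := integral_const_mul _ _
          _ < 4 * β * (η / (8 * β)) := by
              exact mul_lt_mul_of_pos_left hE (by positivity)
          _ = η / 2 := by field_simp; ring
      -- combine
      have hsplit : (∫ x in Ω, |F1 n x - F2 n x|)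
          = (∫ x in A, |F1 n x - F2 n x|) + ∫ x in B, |F1 n x - F2 n x| := by
        conv_lhs => rw [hAB]
        exact setIntegral_union hdisj hBm (habs.mono_set hAsub) (habs.mono_set hBsub)
      have hη'V : η' * V ≤ η / 2 := by
        rw [hη', div_mul_eq_mul_div, div_le_div_iff₀ (by positivity) (by norm_num : (0:ℝ) < 2)]
        nlinarith [hη.le, hV0]
      calc ‖(∫ x in Ω, F1 n x) - ∫ x in Ω, F2 n x‖
          = ‖∫ x in Ω, (F1 n x - F2 n x)‖ := by rw [integral_sub hfi1 hfi2]
        _ ≤ ∫ x in Ω, ‖F1 n x - F2 n x‖ := norm_integral_le_integral_norm _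
        _ = ∫ x in Ω, |F1 n x - F2 n x| := by simp [Real.norm_eq_abs]
        _ = (∫ x in A, |F1 n x - F2 n x|) + ∫ x in B, |F1 n x - F2 n x| := hsplit
        _ < η / 2 + η / 2 := add_lt_add_of_le_of_lt (hintA.trans hη'V) hintB
        _ = η := by ring
    · -- non-integrable case: both integrals vanish
      have e1 : (∫ x in Ω, F1 n x) = 0 := hzero n hPn _ (hy1 n)
      have e2 : (∫ x in Ω, F2 n x) = 0 := hzero n hPn _ (hy2 n)
      rw [e1, e2, sub_zero, norm_zero]
      exact hη
  -- conclude
  exact liminf_eq_of_sub_tendsto_zero' (M := M)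
    (fun n => hlb n _) (fun n => hub n _ (hy1 n))
    (fun n => hlb n _) (fun n => hub n _ (hy2 n)) hdiff
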